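/- (Matrix version of the multiplicative form of Hilbert's Theorem 90.) Let E/F be a finite Galois extension of fields whose Galois group is cyclic of order t, generated by α. If C ∈ GL(d,E) satisfies C·C^α···C^{α^{t−1}} = I, then there exists A ∈ GL(d,E) with C = A·(A^α)⁻¹. -/

import Mathlib

set_option maxHeartbeats 1000000 in
/-- Proposition (1.3), a matrix version of the multiplicative Hilbert's Theorem 90:
if the Galois group of `E/F` is cyclic of order `t` generated by `α`, and
`C ∈ GL(d,E)` satisfies `C·C^α···C^{α^{t−1}} = I`, then there exists `A ∈ GL(d,E)`
with `C = A·(A^α)⁻¹`. -/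
theorem glasby_howlett_prop_1_3
    {F E : Type*} [Field F] [Field E] [Algebra F E]
    [FiniteDimensional F E] [IsGalois F E]
    (t : ℕ) (α : E ≃ₐ[F] E) (hord : orderOf α = t)
    (hgen : ∀ σ : E ≃ₐ[F] E, σ ∈ Subgroup.zpowers α)
    {d : ℕ}
    (C : GL (Fin d) E)
    (hC : ((List.range t).map fun i =>
        (C : Matrix (Fin d) (Fin d) E).map ⇑(α ^ i)).prod = 1) :
    ∃ A : Matrix (Fin d) (Fin d) E, IsUnit A ∧
      (C : Matrix (Fin d) (Fin d) E) = A * (A.map ⇑α)⁻¹ := by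
  classical
  set Cm : Matrix (Fin d) (Fin d) E := (C : Matrix (Fin d) (Fin d) E) with hCm
  set c : ℕ → Matrix (Fin d) (Fin d) E :=
    fun i => ((List.range i).map fun j => Cm.map ⇑(α ^ j)).prod with hc
  have hc0 : c 0 = 1 := by simp [hc]
  have hct : c t = 1 := hC
  have ht : 0 < t := hord ▸ orderOf_pos α
  have hαt : α ^ t = 1 := by rw [← hord]; exact pow_orderOf_eq_one α
  have hcoemul : ∀ i : ℕ, ⇑(α ^ (i + 1)) = ⇑α ∘ ⇑(α ^ i) := by
    intro i; funext x; rw [pow_succ']; rfl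
  have hcsucc : ∀ i, Cm * (c i).map ⇑α = c (i + 1) := by
    intro i
    have hmap : (c i).map ⇑α =
        ((List.range i).map fun j => Cm.map ⇑(α ^ (j + 1))).prod := by
      have h0 : (c i).map ⇑α = (RingHom.mapMatrix (α : E →+* E)) (c i) := rfl
      rw [h0]
      simp only [hc]
      rw [map_list_prod, List.map_map]
      congr 1
      refine List.map_congr_left fun j _ => ?_
      simp [Function.comp, RingHom.mapMatrix_apply, Matrix.map_map, hcoemul]
    rw [hmap]
    simp only [hc]
    rw [List.range_succ_eq_map, List.map_cons, List.prod_cons, List.map_map]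
    have e1 : Cm.map ⇑(α ^ 0) = Cm := by
      ext r k; simp
    have e2 : List.map (fun j => Cm.map ⇑(α ^ (j + 1))) (List.range i) =
        List.map ((fun j => Cm.map ⇑(α ^ j)) ∘ Nat.succ) (List.range i) :=
      List.map_congr_left fun j _ => by simp [Function.comp]
    rw [e1, e2]
  set p : (Fin d → E) → (Fin d → E) :=
    fun u => ∑ i ∈ Finset.range t, (c i).mulVec fun k => (α ^ i) (u k) with hp
  -- the image of p spans
  have hspan : Submodule.span E (Set.range p) = ⊤ := by
    by_contra hW
    obtain ⟨φ, hφ0, hφ⟩ := Submodule.exists_dual_map_eq_bot_of_lt_top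
      (lt_top_iff_ne_top.2 hW) inferInstance
    have hφp : ∀ u, φ (p u) = 0 := by
      intro u
      have hmem : p u ∈ Submodule.span E (Set.range p) :=
        Submodule.subset_span (Set.mem_range_self u)
      have h2 : φ (p u) ∈ (Submodule.span E (Set.range p)).map φ :=
        Submodule.mem_map_of_mem hmem
      rw [hφ] at h2
      exact (Submodule.mem_bot E).1 h2
    have key : ∀ (w : Fin d → E) (z : E),
        ∑ i ∈ Finset.range t, φ ((c i).mulVec fun k => (α ^ i) (w k)) * (α ^ i) z = 0 := by
      intro w z
      have h1 : p (fun k => z * w k) =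
          ∑ i ∈ Finset.range t, (α ^ i) z • (c i).mulVec fun k => (α ^ i) (w k) := by
        simp only [hp]
        refine Finset.sum_congr rfl fun i _ => ?_
        have hv : (fun k => (α ^ i) (z * w k)) = (α ^ i) z • fun k => (α ^ i) (w k) := by
          funext k; simp [map_mul, Pi.smul_apply, smul_eq_mul]
        rw [hv, Matrix.mulVec_smul]
      have h2 := hφp (fun k => z * w k)
      rw [h1, map_sum] at h2
      simp only [map_smul, smul_eq_mul] at h2
      rw [← h2]
      refine Finset.sum_congr rfl fun i _ => ?_
      ring
    -- linear independence of the characters α^i, i < t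
    have hLI : LinearIndependent E (fun i : Fin t => (⇑(α ^ (i : ℕ)) : E → E)) := by
      have hmono : LinearIndependent E (fun f : E →* E => (f : E → E)) :=
        linearIndependent_monoidHom E E
      have hinj : Function.Injective
          (fun i : Fin t => ((α ^ (i : ℕ) : E ≃ₐ[F] E) : E →* E)) := by
        intro i j hij
        have h3 : (α ^ (i : ℕ) : E ≃ₐ[F] E) = α ^ (j : ℕ) := by
          ext x
          exact DFunLike.congr_fun hij x
        have h4 := pow_injOn_Iio_orderOf (x := α)
          (by simpa [hord] using i.2) (by simpa [hord] using j.2) h3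
        exact Fin.ext h4
      exact hmono.comp _ hinj
    have hcoeff : ∀ (w : Fin d → E) (i : Fin t),
        φ ((c (i : ℕ)).mulVec fun k => (α ^ (i : ℕ)) (w k)) = 0 := by
      intro w i
      refine Fintype.linearIndependent_iff.1 hLI
        (fun i : Fin t => φ ((c (i : ℕ)).mulVec fun k => (α ^ (i : ℕ)) (w k))) ?_ i
      funext z
      simp only [Finset.sum_apply, Pi.smul_apply, smul_eq_mul, Pi.zero_apply]
      rw [Fin.sum_univ_eq_sum_range
        (fun i => φ ((c i).mulVec fun k => (α ^ i) (w k)) * (α ^ i) z) t]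
      exact key w z
    have hφzero : φ = 0 := by
      refine LinearMap.ext fun w => ?_
      have h5 : φ ((c 0).mulVec fun k => (α ^ 0) (w k)) = 0 := hcoeff w ⟨0, ht⟩
      rw [hc0, pow_zero] at h5
      simpa [Matrix.one_mulVec] using h5
    exact hφ0 hφzero
  -- extract a basis from the image of p
  obtain ⟨s, hs_sub, hs_span, hs_li⟩ := exists_linearIndependent E (Set.range p)
  let hb : Module.Basis s E (Fin d → E) := Module.Basis.mk hs_li (by
    rw [Subtype.range_coe, hs_span, hspan])
  let e : s ≃ Fin d := hb.indexEquiv (Pi.basisFun E (Fin d))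
  let b' : Module.Basis (Fin d) E (Fin d → E) := hb.reindex e
  have hmem : ∀ j, b' j ∈ Set.range p := by
    intro j
    have hbj : b' j = ((e.symm j : s) : Fin d → E) := by
      show (hb.reindex e) j = _
      rw [Module.Basis.reindex_apply]
      exact Module.Basis.mk_apply hs_li _ (e.symm j)
    rw [hbj]
    exact hs_sub (e.symm j).2
  choose v hv using hmem
  set A : Matrix (Fin d) (Fin d) E := Matrix.of (fun r j => b' j r) with hA
  have hAeq : A = (Pi.basisFun E (Fin d)).toMatrix ⇑b' := by
    ext r j
    rw [Module.Basis.toMatrix_apply, Pi.basisFun_repr, hA]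
    rfl
  have hAunit : IsUnit A := by
    rw [hAeq]
    have := Module.Basis.invertibleToMatrix (Pi.basisFun E (Fin d)) b'
    exact isUnit_of_invertible _
  -- fixed point property : Cm ⬝ (p u)^α = p u
  have hfix : ∀ u : Fin d → E, Cm.mulVec (fun k => α (p u k)) = p u := by
    intro u
    have h1 : (fun k => α (p u k)) =
        ∑ i ∈ Finset.range t, ((c i).map ⇑α).mulVec fun k => (α ^ (i + 1)) (u k) := by
      funext k
      simp only [hp]
      simp only [Finset.sum_apply]
      rw [map_sum]
      refine Finset.sum_congr rfl fun i _ => ?_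
      rw [Matrix.mulVec, Matrix.mulVec, dotProduct, dotProduct, map_sum]
      refine Finset.sum_congr rfl fun l _ => ?_
      rw [map_mul]
      congr 1
      rw [hcoemul]
      rfl
    rw [h1]
    have h2 : Cm.mulVec (∑ i ∈ Finset.range t,
        ((c i).map ⇑α).mulVec fun k => (α ^ (i + 1)) (u k)) =
        ∑ i ∈ Finset.range t, (c (i + 1)).mulVec fun k => (α ^ (i + 1)) (u k) := by
      rw [← Matrix.mulVecLin_apply, map_sum]
      refine Finset.sum_congr rfl fun i _ => ?_
      rw [Matrix.mulVecLin_apply, Matrix.mulVec_mulVec, hcsucc]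
    rw [h2]
    set G : ℕ → (Fin d → E) := fun i => (c i).mulVec fun k => (α ^ i) (u k) with hG
    have hGt : G t = G 0 := by
      simp only [hG, hct, hc0, hαt, pow_zero]
    have h3 : ∑ i ∈ Finset.range t, G (i + 1) = ∑ i ∈ Finset.range t, G i := by
      have h4 := Finset.sum_range_succ' G t
      have h5 := Finset.sum_range_succ G t
      rw [h5, hGt] at h4
      exact add_right_cancel h4.symm
    simp only [hp]
    exact h3
  have hmain : Cm * A.map ⇑α = A := by
    ext r j
    have h6 := congrFun (hfix (v j)) r
    rw [hv j] at h6
    calc (Cm * A.map ⇑α) r j = Cm.mulVec (fun k => α (b' j k)) r := by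
          rw [Matrix.mul_apply, Matrix.mulVec, dotProduct]
          exact Finset.sum_congr rfl fun k _ => rfl
      _ = b' j r := h6
      _ = A r j := rfl
  have hAαunit : IsUnit (A.map ⇑α) := by
    have h8 := hAunit.map (RingHom.mapMatrix (α : E →+* E))
    simpa [RingHom.mapMatrix_apply] using h8
  refine ⟨A, hAunit, ?_⟩
  have h7 : A.map ⇑α * (A.map ⇑α)⁻¹ = 1 :=
    Matrix.mul_nonsing_inv _ ((Matrix.isUnit_iff_isUnit_det _).1 hAαunit)
  calc Cm = Cm * (A.map ⇑α * (A.map ⇑α)⁻¹) := by rw [h7, mul_one]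
    _ = Cm * A.map ⇑α * (A.map ⇑α)⁻¹ := by rw [mul_assoc]
    _ = A * (A.map ⇑α)⁻¹ := by rw [hmain]
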